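/- arXiv:1007.0143 — 3 statements merged into one kernel-verified Lean document; each statement's English description precedes it below -/
import Mathlib

section
/- Let m, n, p, r, s, t, u be positive natural numbers, let A be a real s×t matrix and B a real t×u matrix. Then ρ_m(A·B) = ρ_{mn}(μ^{p×n}_n(A) · μ^{n×r}_n(B)), where μ^{p×n}_n(A) is the sp×tn block matrix with (i,k) block (n·A_{ik}/(pn))·𝟙_{p×n} and μ^{n×r}_n(B) is the tn×ur block matrix with (k,j) block (n·B_{kj}/(nr))·𝟙_{n×r}. -/
open Matrix BigOperators

/-- The matrix valuation ρ_m: sum of all entries divided by m. -/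
noncomputable def rho {α β : Type*} [Fintype α] [Fintype β]
    (m : ℕ) (A : Matrix α β ℝ) : ℝ :=
  (∑ i, ∑ j, A i j) / (m : ℝ)

/-- The numeric representation μ^{p×q}_n extended entrywise to a matrix:
each entry `A i j` is replaced by the constant p×q block `(n * A i j / (p*q)) • 𝟙`. -/
noncomputable def muMat (n p q : ℕ) {r s : ℕ} (A : Matrix (Fin r) (Fin s) ℝ) :
    Matrix (Fin r × Fin p) (Fin s × Fin q) ℝ :=
  fun ik jl => n * A ik.1 jl.1 / (p * q : ℕ)

theorem stmt_7 (m n p r s t u : ℕ) (hm : 0 < m) (hn : 0 < n) (hp : 0 < p)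
    (hr : 0 < r) (hs : 0 < s) (ht : 0 < t) (hu : 0 < u)
    (A : Matrix (Fin s) (Fin t) ℝ) (B : Matrix (Fin t) (Fin u) ℝ) :
    rho m (A * B) = rho (m * n) (muMat n p n A * muMat n n r B) := by
  have hn' : (n:ℝ) ≠ 0 := Nat.cast_ne_zero.mpr hn.ne'
  have hp' : (p:ℝ) ≠ 0 := Nat.cast_ne_zero.mpr hp.ne'
  have hr' : (r:ℝ) ≠ 0 := Nat.cast_ne_zero.mpr hr.ne'
  have hm' : (m:ℝ) ≠ 0 := Nat.cast_ne_zero.mpr hm.ne'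
  simp only [rho, muMat, Matrix.mul_apply, Fintype.sum_prod_type,
    Finset.sum_div, Finset.sum_const, Finset.card_univ, Fintype.card_fin,
    nsmul_eq_mul, Nat.cast_mul, Finset.mul_sum]
  refine Finset.sum_congr rfl fun i _ => Finset.sum_congr rfl fun j _ =>
    Finset.sum_congr rfl fun k _ => ?_
  field_simp
end

section
/- Let m, n, p, r, s be positive natural numbers, let A be a real m×m matrix that is an additive combination of a scalar and a constant matrix (A = c·𝟙_{m×m} + s'·I_m for some reals c, s'), and let B be a real m×s matrix. Then ρ_m(A·B) = ρ_{mn}(μ^{p×n}_n(A) · μ^{n×r}_n(B)) = ρ_{mn}(μ^{p×n}_n(A)) · ρ_{mn}(μ^{n×r}_n(B)). -/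
open Matrix BigOperators

/-- The all-ones matrix. -/
def allOnes (p q : ℕ) : Matrix (Fin p) (Fin q) ℝ := fun _ _ => 1

lemma rho_muMat (m n p q a b : ℕ) (hm : 0 < m) (hn : 0 < n) (hp : 0 < p) (hq : 0 < q)
    (A : Matrix (Fin a) (Fin b) ℝ) :
    rho (m * n) (muMat n p q A) = rho m A := by
  have hn' : (n:ℝ) ≠ 0 := Nat.cast_ne_zero.mpr hn.ne'
  have hp' : (p:ℝ) ≠ 0 := Nat.cast_ne_zero.mpr hp.ne'
  have hq' : (q:ℝ) ≠ 0 := Nat.cast_ne_zero.mpr hq.ne'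
  have hm' : (m:ℝ) ≠ 0 := Nat.cast_ne_zero.mpr hm.ne'
  simp only [rho, muMat, Fintype.sum_prod_type, Finset.sum_const, Finset.card_univ,
    Fintype.card_fin, nsmul_eq_mul, Nat.cast_mul, Finset.sum_div, Finset.mul_sum]
  rw [Finset.sum_congr rfl (fun i _ => ?_)]
  rw [Finset.sum_congr rfl (fun j _ => ?_)]
  field_simp

lemma rho_muMat_mul (a b c n p r : ℕ) (ha : 0 < a) (hn : 0 < n) (hp : 0 < p) (hr : 0 < r)
    (A : Matrix (Fin a) (Fin b) ℝ) (B : Matrix (Fin b) (Fin c) ℝ) :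
    rho a (A * B) = rho (a * n) (muMat n p n A * muMat n n r B) := by
  have hn' : (n:ℝ) ≠ 0 := Nat.cast_ne_zero.mpr hn.ne'
  have hp' : (p:ℝ) ≠ 0 := Nat.cast_ne_zero.mpr hp.ne'
  have hr' : (r:ℝ) ≠ 0 := Nat.cast_ne_zero.mpr hr.ne'
  have ha' : (a:ℝ) ≠ 0 := Nat.cast_ne_zero.mpr ha.ne'
  simp only [rho, muMat, Matrix.mul_apply, Fintype.sum_prod_type, Finset.sum_const,
    Finset.card_univ, Fintype.card_fin, nsmul_eq_mul, Nat.cast_mul, Finset.sum_div,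
    Finset.mul_sum]
  rw [Finset.sum_congr rfl (fun i _ => ?_)]
  rw [Finset.sum_congr rfl (fun j _ => ?_)]
  rw [Finset.sum_congr rfl (fun t _ => ?_)]
  field_simp

lemma rho_mul_special (m s : ℕ) (hm : 0 < m) (c s' : ℝ) (B : Matrix (Fin m) (Fin s) ℝ) :
    rho m ((c • allOnes m m + s' • (1 : Matrix (Fin m) (Fin m) ℝ)) * B)
      = rho m (c • allOnes m m + s' • (1 : Matrix (Fin m) (Fin m) ℝ)) * rho m B := by
  have hm' : (m:ℝ) ≠ 0 := Nat.cast_ne_zero.mpr hm.ne'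
  have hT : (∑ j : Fin s, ∑ t : Fin m, B t j) = ∑ i : Fin m, ∑ j : Fin s, B i j :=
    Finset.sum_comm
  have h1 : ∀ (i : Fin m) (j : Fin s),
      ((c • allOnes m m + s' • (1 : Matrix (Fin m) (Fin m) ℝ)) * B) i j
        = c * (∑ t, B t j) + s' * B i j := by
    intro i j
    simp [Matrix.mul_apply, Matrix.add_apply, allOnes, Matrix.one_apply, ite_mul, add_mul,
      zero_mul, Finset.sum_add_distrib, Finset.sum_ite_eq, Finset.mul_sum]
  have hrow : ∀ i : Fin m,
      (∑ j, ((c • allOnes m m + s' • (1 : Matrix (Fin m) (Fin m) ℝ)) * B) i j)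
        = c * (∑ j : Fin s, ∑ t : Fin m, B t j) + s' * ∑ j, B i j := by
    intro i
    simp only [h1, Finset.sum_add_distrib, Finset.mul_sum]
  have h2 : (∑ i, ∑ j, ((c • allOnes m m + s' • (1 : Matrix (Fin m) (Fin m) ℝ)) * B) i j)
      = (m : ℝ) * (c * ∑ i, ∑ j, B i j) + s' * ∑ i, ∑ j, B i j := by
    rw [Finset.sum_congr rfl (fun i _ => hrow i), Finset.sum_add_distrib,
      Finset.sum_const, Finset.card_univ, Fintype.card_fin, nsmul_eq_mul,
      ← Finset.mul_sum, hT]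
  have h3 : (∑ i, ∑ j, (c • allOnes m m + s' • (1 : Matrix (Fin m) (Fin m) ℝ)) i j)
      = c * (m:ℝ)^2 + s' * m := by
    simp [Matrix.add_apply, allOnes, Matrix.one_apply, Finset.sum_add_distrib,
      Finset.sum_ite_eq, Finset.mul_sum]
    ring
  simp only [rho, h2, h3]
  field_simp

theorem stmt_8 (m n p r s : ℕ) (hm : 0 < m) (hn : 0 < n) (hp : 0 < p)
    (hr : 0 < r) (hs : 0 < s)
    (A : Matrix (Fin m) (Fin m) ℝ)
    (hA : ∃ c s' : ℝ, A = c • allOnes m m + s' • (1 : Matrix (Fin m) (Fin m) ℝ))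
    (B : Matrix (Fin m) (Fin s) ℝ) :
    rho m (A * B) = rho (m * n) (muMat n p n A * muMat n n r B) ∧
    rho (m * n) (muMat n p n A * muMat n n r B) =
      rho (m * n) (muMat n p n A) * rho (m * n) (muMat n n r B) := by
  have h1 := rho_muMat_mul m m s n p r hm hn hp hr A B
  refine ⟨h1, ?_⟩
  rw [← h1, rho_muMat m n p n m m hm hn hp hn A, rho_muMat m n n r m s hm hn hn hr B]
  obtain ⟨c, s', rfl⟩ := hA
  exact rho_mul_special m s hm c s' B
end

section
/- Let n, N be positive natural numbers and let A_1, …, A_N be real n×n matrices such that for each i with 1 ≤ i ≤ N, either (1) A_i is a scalar matrix (A_i = c·I_n for some real c) or a constant matrix (A_i = c·𝟙_{n×n} for some real c), or (2) A_i = J_n^{p_i} for some natural number p_i and both A_{i−1} (if i > 1) and A_{i+1} (if i < N) are constant matrices. Then ρ_n(A_1·A_2·⋯·A_N) = ρ_n(A_1)·ρ_n(A_2)·⋯·ρ_n(A_N). -/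
open Matrix BigOperators

/-- A scalar matrix: c·I. -/
def IsScalarMat {n : ℕ} (A : Matrix (Fin n) (Fin n) ℝ) : Prop :=
  ∃ c : ℝ, A = c • (1 : Matrix (Fin n) (Fin n) ℝ)

/-- A constant matrix: c·𝟙 where 𝟙 is the all-ones matrix. -/
def IsConstMat {n : ℕ} (A : Matrix (Fin n) (Fin n) ℝ) : Prop :=
  ∃ c : ℝ, A = fun _ _ => c

/-- The n×n Jordan block: ones on the superdiagonal, zeros elsewhere. -/
def jordan (n : ℕ) : Matrix (Fin n) (Fin n) ℝ :=
  fun i j => if (j : ℕ) = (i : ℕ) + 1 then 1 else 0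

lemma rho_mul_left_constRows {n : ℕ} (hn : 0 < n)
    (M R : Matrix (Fin n) (Fin n) ℝ)
    (h : ∀ i k k', M i k = M i k') :
    rho n (M * R) = rho n M * rho n R := by
  have i0 : Fin n := ⟨0, hn⟩
  have key : (∑ i, ∑ j, (M * R) i j) = (∑ i, M i i0) * (∑ j, ∑ k, R k j) := by
    simp only [Matrix.mul_apply]
    rw [Finset.sum_mul]
    refine Finset.sum_congr rfl fun i _ => ?_
    calc ∑ j, ∑ k, M i k * R k j
        = ∑ j, ∑ k, M i i0 * R k j := by
          refine Finset.sum_congr rfl fun j _ => Finset.sum_congr rfl fun k _ => by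
            rw [h i k i0]
      _ = M i i0 * ∑ j, ∑ k, R k j := by
          simp_rw [← Finset.mul_sum]
  have hM : (∑ i, ∑ j, M i j) = (n : ℝ) * ∑ i, M i i0 := by
    rw [Finset.mul_sum]
    refine Finset.sum_congr rfl fun i _ => ?_
    have h2 : ∑ j, M i j = ∑ _j : Fin n, M i i0 :=
      Finset.sum_congr rfl fun j _ => h i j i0
    rw [h2, Finset.sum_const, Finset.card_univ, Fintype.card_fin, nsmul_eq_mul]
  have hn' : (n : ℝ) ≠ 0 := by positivity
  unfold rho
  rw [key, hM, Finset.sum_comm]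
  field_simp

lemma rho_smul_one_mul {n : ℕ} (hn : 0 < n) (c : ℝ)
    (R : Matrix (Fin n) (Fin n) ℝ) :
    rho n ((c • (1 : Matrix (Fin n) (Fin n) ℝ)) * R)
      = rho n (c • (1 : Matrix (Fin n) (Fin n) ℝ)) * rho n R := by
  have hn' : (n : ℝ) ≠ 0 := by positivity
  have h1 : (c • (1 : Matrix (Fin n) (Fin n) ℝ)) * R = c • R := by
    rw [Matrix.smul_mul, one_mul]
  have h2 : rho n (c • (1 : Matrix (Fin n) (Fin n) ℝ)) = c := by
    unfold rho
    simp only [Matrix.smul_apply, Matrix.one_apply, smul_eq_mul, mul_ite, mul_one, mul_zero,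
      Finset.sum_ite_eq, Finset.mem_univ, if_true, Finset.sum_const, Finset.card_univ,
      Fintype.card_fin, nsmul_eq_mul]
    field_simp
  rw [h1, h2]
  unfold rho
  simp [Matrix.smul_apply, smul_eq_mul, ← Finset.mul_sum, mul_div_assoc]

lemma rho_mul_constMat {n : ℕ} (hn : 0 < n) (B C : Matrix (Fin n) (Fin n) ℝ)
    (c : ℝ) (hC : ∀ i j, C i j = c) :
    rho n (B * C) = rho n B * rho n C := by
  have hn' : (n : ℝ) ≠ 0 := by positivity
  have key : (∑ i, ∑ j, (B * C) i j) = (∑ i, ∑ k, B i k) * c * n := by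
    simp only [Matrix.mul_apply, hC, Finset.sum_const, Finset.card_univ, Fintype.card_fin,
      nsmul_eq_mul, ← Finset.sum_mul, ← Finset.mul_sum]
    ring
  have hCsum : (∑ i, ∑ j, C i j) = (n : ℝ) * ((n : ℝ) * c) := by
    simp [hC, Finset.sum_const, Finset.card_univ, mul_assoc]
  unfold rho
  rw [key, hCsum]
  field_simp
  try ring

theorem stmt_17 (n N : ℕ) (hn : 0 < n) (hN : 0 < N)
    (A : Fin N → Matrix (Fin n) (Fin n) ℝ)
    (hA : ∀ i : Fin N,
      (IsScalarMat (A i) ∨ IsConstMat (A i)) ∨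
      (∃ p : ℕ, A i = jordan n ^ p ∧
        (∀ h : 0 < (i : ℕ),
          IsConstMat (A ⟨(i : ℕ) - 1, Nat.lt_of_le_of_lt (Nat.sub_le _ _) i.isLt⟩)) ∧
        (∀ h : (i : ℕ) + 1 < N, IsConstMat (A ⟨(i : ℕ) + 1, h⟩)))) :
    rho n (List.ofFn A).prod = ∏ i : Fin N, rho n (A i) := by
  obtain ⟨N', rfl⟩ : ∃ N', N = N' + 1 := ⟨N - 1, by omega⟩
  clear hN
  induction N' with
  | zero =>
    simp [List.ofFn_succ]
  | succ k ih =>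
    have hA' : ∀ i : Fin (k+1),
        (IsScalarMat (A i.succ) ∨ IsConstMat (A i.succ)) ∨
        (∃ p : ℕ, A i.succ = jordan n ^ p ∧
          (∀ h : 0 < (i : ℕ),
            IsConstMat (A (Fin.succ ⟨(i : ℕ) - 1,
              Nat.lt_of_le_of_lt (Nat.sub_le _ _) i.isLt⟩))) ∧
          (∀ h : (i : ℕ) + 1 < k + 1, IsConstMat (A (Fin.succ ⟨(i : ℕ) + 1, h⟩)))) := by
      intro i
      rcases hA i.succ with h | ⟨p, hp, hl, hr⟩
      · exact Or.inl h
      · refine Or.inr ⟨p, hp, fun hi => ?_, fun hi => ?_⟩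
        · have h2 := hl (by simp)
          convert h2 using 2
          ext <;> simp <;> omega
        · have h2 := hr (by simp only [Fin.val_succ]; omega)
          exact h2
    have hprod : (List.ofFn A).prod
        = A 0 * (List.ofFn fun i : Fin (k+1) => A i.succ).prod := by
      rw [List.ofFn_succ, List.prod_cons]
    rcases hA 0 with (⟨c, hc⟩ | ⟨c, hc⟩) | ⟨p, hp, _, hr⟩
    · rw [hprod, Fin.prod_univ_succ, hc, rho_smul_one_mul hn, ih _ hA']
    · rw [hprod, Fin.prod_univ_succ,
        rho_mul_left_constRows hn _ _ (fun i k1 k2 => by rw [hc]), ih _ hA']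
    · -- Jordan case: A 1 is a constant matrix
      have hlt : ((0 : Fin (k+2)) : ℕ) + 1 < k + 2 := by simp
      obtain ⟨c, hc⟩ := hr hlt
      have e : (⟨((0 : Fin (k+2)) : ℕ) + 1, hlt⟩ : Fin (k+2)) = Fin.succ (0 : Fin (k+1)) := by
        ext; simp
      rw [e] at hc
      have hc' : ∀ i j, A (Fin.succ (0 : Fin (k+1))) i j = c := fun i j => by rw [hc]
      have hprod2 : (List.ofFn fun i : Fin (k+1) => A i.succ).prod
          = A (Fin.succ (0 : Fin (k+1)))
            * (List.ofFn fun j : Fin k => A (Fin.succ (Fin.succ j))).prod := by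
        rw [List.ofFn_succ, List.prod_cons]
      set T : Matrix (Fin n) (Fin n) ℝ :=
        (List.ofFn fun j : Fin k => A (Fin.succ (Fin.succ j))).prod with hT
      calc rho n (List.ofFn A).prod
          = rho n ((A 0 * A (Fin.succ (0 : Fin (k+1)))) * T) := by
            rw [hprod, hprod2, mul_assoc]
        _ = rho n (A 0 * A (Fin.succ (0 : Fin (k+1)))) * rho n T := by
            refine rho_mul_left_constRows hn _ _ fun i k1 k2 => ?_
            simp only [Matrix.mul_apply]
            exact Finset.sum_congr rfl fun j _ => by rw [hc' j k1, hc' j k2]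
        _ = (rho n (A 0) * rho n (A (Fin.succ (0 : Fin (k+1))))) * rho n T := by
            rw [rho_mul_constMat hn _ _ c hc']
        _ = rho n (A 0) * (rho n (A (Fin.succ (0 : Fin (k+1)))) * rho n T) := by ring
        _ = rho n (A 0) * rho n (A (Fin.succ (0 : Fin (k+1))) * T) := by
            rw [rho_mul_left_constRows hn _ _ fun i k1 k2 => by rw [hc' i k1, hc' i k2]]
        _ = rho n (A 0) * rho n (List.ofFn fun i : Fin (k+1) => A i.succ).prod := by
            rw [hprod2]
        _ = rho n (A 0) * ∏ i : Fin (k+1), rho n (A i.succ) := by rw [ih _ hA']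
        _ = ∏ i : Fin (k+2), rho n (A i) :=
            (Fin.prod_univ_succ (f := fun i : Fin (k + 2) => rho n (A i))).symm
end
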